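/- The point E₃ = (0, ν/β, (lKrβ - lKbν - μrβ)/(rβ²), K(rβ - bν)/(rβ)) is an equilibrium of the logistic ecoepidemic system, and all its coordinates are nonnegative if and only if rβ(lK - μ) ≥ bKlν (which in particular implies rβ ≥ bν when lK > μ). -/
import Mathlib


open Polynomial

noncomputable def logisticRHS (g f τ l β q μ c ν r b K : ℝ) (x : Fin 4 → ℝ) : Fin 4 → ℝ :=
  ![x 0 * (g * x 2 + f * x 1 - τ),
    x 1 * (l * x 3 - β * x 2 - q * x 0 - μ),
    x 2 * (β * x 1 - c * x 0 - ν),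
    x 3 * (r * (1 - x 3 / K) - b * x 1)]

noncomputable def logisticJac (g f τ l β q μ c ν r b K : ℝ) (x : Fin 4 → ℝ) :
    Matrix (Fin 4) (Fin 4) ℝ :=
  Matrix.of ![
    ![g * x 2 + f * x 1 - τ, f * x 0, g * x 0, 0],
    ![-(q * x 1), l * x 3 - β * x 2 - q * x 0 - μ, -(β * x 1), l * x 1],
    ![-(c * x 2), β * x 2, β * x 1 - c * x 0 - ν, 0],
    ![0, -(b * x 3), 0, r * (1 - x 3 / K) - b * x 1 - r * x 3 / K]]

theorem stmt12 (g f τ l β q μ c ν r b K : ℝ)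
    (hg : 0 < g) (hf : 0 < f) (hτ : 0 < τ) (hl : 0 < l) (hβ : 0 < β)
    (hq : 0 < q) (hμ : 0 < μ) (hc : 0 < c) (hν : 0 < ν) (hr : 0 < r) (hb : 0 < b)
    (hK : 0 < K) :
    logisticRHS g f τ l β q μ c ν r b K
      ![0, ν / β, (l * K * r * β - l * K * b * ν - μ * r * β) / (r * β ^ 2),
        K * (r * β - b * ν) / (r * β)] = 0 ∧
    (((0:ℝ) ≤ 0 ∧ 0 ≤ ν / β ∧
        0 ≤ (l * K * r * β - l * K * b * ν - μ * r * β) / (r * β ^ 2) ∧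
        0 ≤ K * (r * β - b * ν) / (r * β)) ↔
      b * K * l * ν ≤ r * β * (l * K - μ)) ∧
    (μ < l * K → b * K * l * ν ≤ r * β * (l * K - μ) → b * ν ≤ r * β) := by
  have hβ0 : β ≠ 0 := ne_of_gt hβ
  have hr0 : r ≠ 0 := ne_of_gt hr
  have hrβ : 0 < r * β ^ 2 := by positivity
  refine ⟨?_, ?_, ?_⟩
  · funext i
    fin_cases i <;>
      simp [logisticRHS, Matrix.cons_val_zero, Matrix.cons_val_one] <;>
      field_simp <;> try ring
    all_goals tauto
  · constructor
    · rintro ⟨-, -, h3, -⟩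
      have := (div_nonneg_iff.mp h3)
      have h : 0 ≤ l * K * r * β - l * K * b * ν - μ * r * β := by
        rcases this with ⟨h, _⟩ | ⟨_, h⟩
        · exact h
        · nlinarith
      nlinarith
    · intro h
      have hnum : 0 ≤ l * K * r * β - l * K * b * ν - μ * r * β := by nlinarith
      have hμlK : μ < l * K := by nlinarith [mul_pos (mul_pos (mul_pos hb hK) hl) hν, mul_pos hr hβ]
      have hbν : b * ν ≤ r * β := by nlinarith [mul_pos hl hK, mul_pos (mul_pos hμ hr) hβ]
      refine ⟨le_refl 0, by positivity, div_nonneg hnum (le_of_lt hrβ), ?_⟩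
      apply div_nonneg _ (by positivity)
      nlinarith
  · intro h1 h2
    nlinarith [mul_pos hl hK, mul_pos (mul_pos hμ hr) hβ]
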